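/- If Γ is a finite vertex-transitive graph that is neither null nor complete and satisfies ω(Γ) = χ(Γ), then χ(Γ) = |V(Γ)|/α(Γ), and the colour classes of any minimum proper vertex-colouring of Γ form a partition of V(Γ) into exactly ω(Γ) independent sets, each of size α(Γ). -/

import Mathlib

open SimpleGraph Finset

/-- The independence number of a graph: the clique number of its complement. -/
noncomputable def SimpleGraph.indepNum' {V : Type*} (G : SimpleGraph V) : ℕ :=
  Gᶜ.cliqueNum

/-- A graph is vertex-transitive if its automorphism group is transitive on vertices. -/
def SimpleGraph.IsVertexTransitive {V : Type*} (G : SimpleGraph V) : Prop :=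
  ∀ u v : V, ∃ φ : G ≃g G, φ u = v

lemma key {V : Type*} [Fintype V] (G : SimpleGraph V) (hvt : G.IsVertexTransitive)
    (K A : Finset V) (hK : G.IsClique K) (hA : Gᶜ.IsClique A) :
    K.card * A.card ≤ Fintype.card V := by
  classical
  rcases isEmpty_or_nonempty V with hV | hV
  · simp [Finset.eq_empty_of_isEmpty K]
  haveI : Finite (G ≃g G) :=
    Finite.of_injective (fun (g : G ≃g G) => (g : V → V)) DFunLike.coe_injective
  haveI : Fintype (G ≃g G) := Fintype.ofFinite _
  set s : V → V → ℕ := fun k a => Fintype.card {g : G ≃g G // g k = a} with hs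
  -- each fiber is nonempty
  have hpos : ∀ k a, 1 ≤ s k a := by
    intro k a
    obtain ⟨g, hg⟩ := hvt k a
    exact Fintype.card_pos_iff.mpr ⟨⟨g, hg⟩⟩
  -- s k · is constant
  have hconst : ∀ k a b, s k a = s k b := by
    intro k a b
    obtain ⟨g0, hg0⟩ := hvt a b
    refine Fintype.card_congr ⟨fun g => ⟨g.1.trans g0, by simp [g.2, hg0]⟩,
      fun g => ⟨g.1.trans g0.symm, by simp [g.2, ← hg0]⟩, ?_, ?_⟩ <;>
      (rintro ⟨g, hg⟩; ext x; simp)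
  -- sum of fibers is the whole automorphism "group"
  have hsum : ∀ k, ∑ a, s k a = Fintype.card (G ≃g G) := by
    intro k
    rw [← Fintype.card_sigma]
    exact Fintype.card_congr (Equiv.sigmaFiberEquiv (fun g : G ≃g G => g k))
  have hcardV : ∀ k a, Fintype.card V * s k a = Fintype.card (G ≃g G) := by
    intro k a
    rw [← hsum k]
    rw [Finset.sum_congr rfl (fun b _ => hconst k b a)]
    simp [mul_comm]
  obtain ⟨v0⟩ := hV
  set m := s v0 v0 with hm
  have hall : ∀ k a, s k a = m := by
    intro k a
    have h1 := hcardV k a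
    have h2 := hcardV v0 v0
    have := h1.trans h2.symm
    exact Nat.eq_of_mul_eq_mul_left (Fintype.card_pos_iff.mpr ⟨v0⟩) this
  -- double counting
  have per_g : ∀ g : G ≃g G, ((K ×ˢ A).filter (fun p => g p.1 = p.2)).card ≤ 1 := by
    intro g
    rw [Finset.card_le_one]
    rintro ⟨k, a⟩ hp ⟨k', a'⟩ hq
    simp only [Finset.mem_filter, Finset.mem_product] at hp hq
    obtain ⟨⟨hk, ha⟩, hga⟩ := hp
    obtain ⟨⟨hk', ha'⟩, hga'⟩ := hq
    by_cases hkk : k = k'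
    · subst hkk; simp [← hga, ← hga']
    exfalso
    have hadj : G.Adj k k' := hK hk hk' hkk
    have hadj2 : G.Adj (g k) (g k') := g.map_rel_iff.mpr hadj
    rw [hga, hga'] at hadj2
    have hne : a ≠ a' := hadj2.ne
    exact ((G.compl_adj a a').mp (hA ha ha' hne)).2 hadj2
  have fiber_eq : ∀ k a, (Finset.univ.filter (fun g : G ≃g G => g k = a)).card = s k a := by
    intro k a
    rw [hs]
    exact (Fintype.card_subtype _).symm
  have total : ∑ g : G ≃g G, ((K ×ˢ A).filter (fun p => g p.1 = p.2)).card
      = ∑ p ∈ K ×ˢ A, s p.1 p.2 := by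
    simp_rw [Finset.card_filter]
    rw [Finset.sum_comm]
    exact Finset.sum_congr rfl fun p _ => by
      rw [← fiber_eq p.1 p.2, Finset.card_filter]
  have hle : K.card * A.card * m ≤ Fintype.card (G ≃g G) := by
    calc K.card * A.card * m = ∑ p ∈ K ×ˢ A, s p.1 p.2 := by
          rw [Finset.sum_congr rfl fun p _ => hall p.1 p.2, Finset.sum_const,
            Finset.card_product, smul_eq_mul]
      _ = ∑ g : G ≃g G, ((K ×ˢ A).filter (fun p => g p.1 = p.2)).card := total.symm
      _ ≤ ∑ g : G ≃g G, 1 := Finset.sum_le_sum fun g _ => per_g g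
      _ = Fintype.card (G ≃g G) := by simp
  rw [← hcardV v0 v0, ← hm] at hle
  exact Nat.le_of_mul_le_mul_right hle (hpos v0 v0)


theorem stmt_1 {V : Type*} [Fintype V] (G : SimpleGraph V)
    (hvt : G.IsVertexTransitive) (hnn : G ≠ ⊥) (hnc : G ≠ ⊤)
    (hωχ : (G.cliqueNum : ℕ∞) = G.chromaticNumber) :
    G.chromaticNumber = ((Fintype.card V / G.indepNum' : ℕ) : ℕ∞) ∧
      ∀ (C : G.Coloring (Fin G.cliqueNum)) (i : Fin G.cliqueNum),
        (C.colorClass i).ncard = G.indepNum' := by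
  classical
  obtain ⟨u, w, huw⟩ : ∃ u w, G.Adj u w := by
    by_contra h
    push_neg at h
    exact hnn (by ext a b; simp [h a b])
  haveI : Nonempty V := ⟨u⟩
  obtain ⟨K, hK⟩ := G.exists_isNClique_cliqueNum
  obtain ⟨A, hA⟩ := Gᶜ.exists_isNClique_cliqueNum
  have h1 : G.cliqueNum * G.indepNum' ≤ Fintype.card V := by
    have := key G hvt K A hK.1 hA.1
    rwa [hK.2, hA.2] at this
  have hcol : G.Colorable G.cliqueNum :=
    chromaticNumber_le_iff_colorable.mp (le_of_eq hωχ.symm)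
  have hindep : ∀ (S : Finset V), (∀ x ∈ S, ∀ y ∈ S, x ≠ y → ¬ G.Adj x y) →
      S.card ≤ G.indepNum' := by
    intro S hS
    have tc : Gᶜ.IsClique S := fun x hx y hy hxy =>
      (G.compl_adj x y).mpr ⟨hxy, hS x hx y hy hxy⟩
    exact IsClique.card_le_cliqueNum (tc := tc)
  have hα : 0 < G.indepNum' := by
    have : ({u} : Finset V).card ≤ G.indepNum' := hindep {u} (by simp)
    exact lt_of_lt_of_le (by simp) this
  have classes : ∀ (n : ℕ) (C : G.Coloring (Fin n)),
      ∑ i : Fin n, (Finset.univ.filter (fun v => C v = i)).card = Fintype.card V := by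
    intro n C
    rw [← Finset.card_univ (α := V)]
    exact (Finset.card_eq_sum_card_fiberwise (f := C)
      (fun v _ => Finset.mem_univ (C v))).symm
  have classle : ∀ (n : ℕ) (C : G.Coloring (Fin n)) (i : Fin n),
      (Finset.univ.filter (fun v => C v = i)).card ≤ G.indepNum' := by
    intro n C i
    apply hindep
    intro x hx y hy hxy hadj
    simp only [Finset.mem_filter] at hx hy
    exact C.valid hadj (hx.2.trans hy.2.symm)
  have h2 : Fintype.card V ≤ G.cliqueNum * G.indepNum' := by
    obtain ⟨C⟩ := hcol
    calc Fintype.card V = ∑ i : Fin G.cliqueNum,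
          (Finset.univ.filter (fun v => C v = i)).card := (classes _ C).symm
      _ ≤ ∑ _i : Fin G.cliqueNum, G.indepNum' :=
          Finset.sum_le_sum fun i _ => classle _ C i
      _ = G.cliqueNum * G.indepNum' := by simp [Finset.card_univ, mul_comm]
  have heq : G.cliqueNum * G.indepNum' = Fintype.card V := le_antisymm h1 h2
  constructor
  · rw [← hωχ]
    congr 1
    rw [← heq, Nat.mul_div_cancel _ hα]
  · intro C i
    have hcc : (C.colorClass i).ncard
        = (Finset.univ.filter (fun v => C v = i)).card := by
      rw [Set.ncard_eq_toFinset_card']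
      congr 1
      ext v
      simp [SimpleGraph.Coloring.colorClass]
      exact Set.mem_toFinset
    rw [hcc]
    by_contra hne
    have hlt : (Finset.univ.filter (fun v => C v = i)).card < G.indepNum' :=
      lt_of_le_of_ne (classle _ C i) hne
    have : Fintype.card V < G.cliqueNum * G.indepNum' := by
      rw [← classes _ C]
      calc ∑ j : Fin G.cliqueNum, (Finset.univ.filter (fun v => C v = j)).card
          < ∑ _j : Fin G.cliqueNum, G.indepNum' :=
            Finset.sum_lt_sum (fun j _ => classle _ C j) ⟨i, Finset.mem_univ i, hlt⟩
        _ = G.cliqueNum * G.indepNum' := by simp [Finset.card_univ, mul_comm]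
    omega
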